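/- Let G be a nontrivial group with a normal centerless subgroup K, and let π : G → Aut(K) be the conjugation homomorphism and θ : G/K → Out(K) the induced homomorphism. If (i) K contains no nontrivial normal subgroup N, either finite or isomorphic to ℤⁿ, that is preserved by π(G) and contains only finite π(G)-orbits, and (ii) the restriction of θ to FC(G/K) is injective, then G is icc. -/

import Mathlib

def IsICC (G : Type*) [Group G] : Prop :=
  Nontrivial G ∧ ∀ g : G, g ≠ 1 → {h : G | IsConj g h}.Infinite

/-- The subgroup of inner automorphisms of K. -/
def Inn (K : Type*) [Group K] : Subgroup (MulAut K) := (MulAut.conj : K →* MulAut K).range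

instance Inn.normal (K : Type*) [Group K] : (Inn K).Normal := by
  constructor
  rintro x ⟨k, rfl⟩ φ
  refine ⟨φ k, ?_⟩
  ext h
  simp [MulAut.conj_apply, map_mul, mul_assoc]

/-- The outer automorphism group of K. -/
def Out (K : Type*) [Group K] := MulAut K ⧸ Inn K

instance (K : Type*) [Group K] : Group (Out K) :=
  inferInstanceAs (Group (MulAut K ⧸ Inn K))


private lemma finite_range_of_factor {α β γ : Type*} [Finite γ] (f : α → β) (q : α → γ)
    (h : ∀ a b, q a = q b → f a = f b) : (Set.range f).Finite := by
  cases isEmpty_or_nonempty α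
  · simp [Set.range_eq_empty]
  · refine (Set.finite_range (fun c : γ => f (Function.invFun q c))).subset ?_
    rintro _ ⟨a, rfl⟩
    exact ⟨q a, h _ a (Function.invFun_eq ⟨a, rfl⟩)⟩

open scoped commutatorElement in
private lemma key_contradiction {G : Type*} [Group G] (K : Subgroup G) [K.Normal]
    (π : G →* MulAut K)
    (hπ : ∀ (g : G) (k : K), ((π g k : K) : G) = g * (k : G) * g⁻¹)
    (hi : ¬ ∃ N : Subgroup K, N ≠ ⊥ ∧ N.Normal ∧
      (∀ (g : G), ∀ n ∈ N, π g n ∈ N) ∧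
      (Finite N ∨ ∃ n : ℕ, Nonempty (N ≃* Multiplicative (Fin n → ℤ))) ∧
      (∀ n ∈ N, {x : K | ∃ g : G, π g n = x}.Finite))
    (T : Set K) (hT : T.Finite) (hTinv : ∀ (g : G), ∀ t ∈ T, π g t ∈ T)
    (hne : Subgroup.closure T ≠ ⊥) : False := by
  classical
  apply hi
  set N : Subgroup K := Subgroup.closure T with hN
  haveI : Finite ↥T := hT.to_subtype
  have hcancel : ∀ (x y : G) (k : K), π (x * y) k = π x (π y k) := fun x y k => by
    rw [map_mul]; rfl
  have hmapN : ∀ g : G, Subgroup.map (π g).toMonoidHom N ≤ N := by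
    intro g
    rw [hN, MonoidHom.map_closure]
    exact Subgroup.closure_mono (by rintro _ ⟨t, ht, rfl⟩; exact hTinv g t ht)
  have hNinv : ∀ (g : G), ∀ n ∈ N, π g n ∈ N := fun g n hn => hmapN g ⟨n, hn, rfl⟩
  have hfix : ∀ (g : G), (∀ t ∈ T, π g t = t) → ∀ n ∈ N, π g n = n := by
    intro g hg n hn
    rw [hN] at hn
    induction hn using Subgroup.closure_induction with
    | mem x hx => exact hg x hx
    | one => exact map_one (π g)
    | mul x y hx hy px py => rw [map_mul]; dsimp at *; rw [px, py]
    | inv x hx px => rw [map_inv]; dsimp at *; rw [px]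
  have hconj : ∀ (k n : K), π (↑k) n = k * n * k⁻¹ := by
    intro k n
    apply Subtype.ext
    rw [hπ]
    push_cast
    rfl
  haveI hNnormal : N.Normal := by
    refine ⟨fun n hn k => ?_⟩
    rw [← hconj k n]
    exact hNinv (↑k) n hn
  -- orbit finiteness
  have horb : ∀ n ∈ N, {x : K | ∃ g : G, π g n = x}.Finite := by
    intro n hn
    rw [← Set.finite_coe_iff]
    have : ∀ x : {x : K | ∃ g : G, π g n = x}, ∃ g : G, π g n = ↑x := fun x => x.2
    refine Finite.of_injective
      (fun x : {x : K | ∃ g : G, π g n = x} =>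
        (fun t : ↥T => (⟨π ((this x).choose) ↑t, hTinv _ _ t.2⟩ : ↥T))) ?_
    intro x y hxy
    have hx := (this x).choose_spec
    have hy := (this y).choose_spec
    set a := (this x).choose
    set b := (this y).choose
    have hfixab : ∀ t ∈ T, π (b⁻¹ * a) t = t := by
      intro t ht
      have := congrFun hxy ⟨t, ht⟩
      have h2 : π a t = π b t := congrArg Subtype.val this
      rw [hcancel, h2, ← hcancel, inv_mul_cancel, map_one]
      rfl
    have := hfix _ hfixab n hn
    rw [hcancel] at this
    apply Subtype.ext
    calc (x : K) = π a n := hx.symm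
      _ = π b (π b⁻¹ (π a n)) := by rw [← hcancel, mul_inv_cancel, map_one]; rfl
      _ = π b n := by rw [this]
      _ = y := hy
  -- commutator set of N is finite
  have hcoeN : ∀ a b : ↥N, ((a * b : ↥N) : K) = ↑a * ↑b := fun a b => rfl
  have hfixN : ∀ (g : G), (∀ t : ↥T, π g ↑t = ↑t) → ∀ m : ↥N, π g ↑m = ↑m := by
    intro g hg m
    exact hfix g (fun t ht => hg ⟨t, ht⟩) ↑m m.2
  have hψ : ∀ a a' : ↥N,
      (fun t : ↥T => (⟨π (↑↑a) ↑t, hTinv _ _ t.2⟩ : ↥T)) =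
        (fun t : ↥T => (⟨π (↑↑a') ↑t, hTinv _ _ t.2⟩ : ↥T)) →
      ∀ m : ↥N, π (↑↑a) ↑m = π (↑↑a') ↑m := by
    intro a a' h m
    have hfixaa : ∀ t : ↥T, π ((↑↑a')⁻¹ * ↑↑a) ↑t = ↑t := by
      intro t
      have h2 : π (↑↑a) ↑t = π (↑↑a') ↑t := congrArg Subtype.val (congrFun h t)
      rw [hcancel, h2, ← hcancel, inv_mul_cancel, map_one]
      rfl
    have := hfixN _ hfixaa m
    rw [hcancel] at this
    calc π (↑↑a) ↑m = π (↑↑a') (π ((↑↑a')⁻¹) (π (↑↑a) ↑m)) := by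
          rw [← hcancel, mul_inv_cancel, map_one]; rfl
      _ = π (↑↑a') ↑m := by rw [this]
  have hcom1 : ∀ a b : ↥N, (↑⁅a, b⁆ : K) = (π (↑↑a) ↑b) * (↑b)⁻¹ := by
    intro a b
    rw [hconj]
    show (↑a * ↑b * (↑a)⁻¹ * (↑b)⁻¹ : K) = ↑a * ↑b * (↑a)⁻¹ * (↑b)⁻¹
    rfl
  have hcom2 : ∀ a b : ↥N, (↑⁅a, b⁆ : K) = ↑a * (π (↑↑b) (↑a)⁻¹) := by
    intro a b
    rw [hconj]
    show (↑a * ↑b * (↑a)⁻¹ * (↑b)⁻¹ : K) = ↑a * (↑b * (↑a)⁻¹ * (↑b)⁻¹)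
    group
  haveI hcommSetFin : Finite (commutatorSet ↥N) := by
    rw [← Set.finite_coe_iff] at *
    have hrange : commutatorSet ↥N ⊆
        Set.range (fun p : ↥N × ↥N => ⁅p.1, p.2⁆) := by
      rintro x ⟨g₁, g₂, rfl⟩
      exact ⟨(g₁, g₂), rfl⟩
    rw [Set.finite_coe_iff]
    refine Set.Finite.subset ?_ hrange
    refine finite_range_of_factor _
      (fun p : ↥N × ↥N =>
        ((fun t : ↥T => (⟨π (↑↑p.1) ↑t, hTinv _ _ t.2⟩ : ↥T)),
         (fun t : ↥T => (⟨π (↑↑p.2) ↑t, hTinv _ _ t.2⟩ : ↥T)))) ?_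
    rintro ⟨a, b⟩ ⟨a', b'⟩ hq
    have h1 := hψ a a' (congrArg Prod.fst hq)
    have h2 := hψ b b' (congrArg Prod.snd hq)
    apply Subtype.ext
    calc (↑⁅a, b⁆ : K) = (π (↑↑a) ↑b) * (↑b)⁻¹ := hcom1 a b
      _ = (π (↑↑a') ↑b) * (↑b)⁻¹ := by rw [h1 b]
      _ = (↑⁅a', b⁆ : K) := (hcom1 a' b).symm
      _ = ↑a' * (π (↑↑b) (↑a')⁻¹) := hcom2 a' b
      _ = ↑a' * (π (↑↑b') (↑a')⁻¹) := by rw [show ((↑a' : K))⁻¹ = ((a'⁻¹ : ↥N) : K) from rfl, h2 a'⁻¹]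
      _ = (↑⁅a', b'⁆ : K) := (hcom2 a' b').symm
  haveI hfincomm : Finite ↥(_root_.commutator ↥N) := inferInstance
  have hmapcomm : Subgroup.map N.subtype (_root_.commutator ↥N) = ⁅N, N⁆ := by
    rw [_root_.commutator_def, Subgroup.map_commutator, ← MonoidHom.range_eq_map,
      Subgroup.range_subtype]
  haveI hfin2 : Finite ↥(⁅N, N⁆ : Subgroup K) := by
    rw [← hmapcomm]
    exact Finite.of_equiv _ (Subgroup.equivMapOfInjective _ _ N.subtype_injective).toEquiv
  by_cases hab : ⁅N, N⁆ = (⊥ : Subgroup K)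
  swap
  · -- nonabelian case : use the commutator subgroup
    refine ⟨⁅N, N⁆, hab, inferInstance, ?_, Or.inl hfin2,
      fun n hn => horb n (Subgroup.commutator_le_left N N hn)⟩
    intro g n hn
    have : Subgroup.map (π g).toMonoidHom ⁅N, N⁆ ≤ ⁅N, N⁆ := by
      rw [Subgroup.map_commutator]
      exact Subgroup.commutator_mono (hmapN g) (hmapN g)
    exact this ⟨n, hn, rfl⟩
  · -- abelian case
    have hcommN : ∀ a b : ↥N, a * b = b * a := by
      intro a b
      have h1 : ⁅(↑a : K), ↑b⁆ ∈ ⁅N, N⁆ := Subgroup.commutator_mem_commutator a.2 b.2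
      rw [hab, Subgroup.mem_bot, commutatorElement_eq_one_iff_mul_comm] at h1
      exact Subtype.ext h1
    letI : CommGroup ↥N := { (inferInstance : Group ↥N) with mul_comm := hcommN }
    haveI : Group.FG ↥N := by
      rw [Group.fg_iff_subgroup_fg]
      exact ⟨hT.toFinset, by rw [Set.Finite.coe_toFinset]⟩
    haveI : AddGroup.FG (Additive ↥N) := GroupFG.iff_add_fg.mp ‹_›
    obtain ⟨n, ι, fι, p, hp, e, ⟨eqv⟩⟩ :=
      AddCommGroup.equiv_free_prod_directSum_zmod (Additive ↥N)
    haveI : ∀ i : ι, NeZero (p i ^ e i) := fun i => ⟨pow_ne_zero _ (hp i).ne_zero⟩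
    haveI hD : Finite (DirectSum ι fun i => ZMod (p i ^ e i)) :=
      Finite.of_equiv _ (DFinsupp.equivFunOnFintype (ι := ι) (β := fun i => ZMod (p i ^ e i))).symm
    -- torsion transfer
    have htor : ∀ x : ↥N, IsOfFinOrder (↑x : K) ↔ IsOfFinOrder x := by
      intro x
      rw [isOfFinOrder_iff_pow_eq_one, isOfFinOrder_iff_pow_eq_one]
      constructor
      · rintro ⟨m, hm, h⟩
        exact ⟨m, hm, Subtype.ext (by push_cast [h]; rfl)⟩
      · rintro ⟨m, hm, h⟩
        exact ⟨m, hm, by rw [← SubmonoidClass.coe_pow, h]; rfl⟩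
    -- the free part of a torsion element is zero
    have hfree : ∀ x : ↥N, IsOfFinOrder x → (eqv (Additive.ofMul x)).1 = 0 := by
      intro x hx
      have hadd : IsOfFinAddOrder (Additive.ofMul x) := isOfFinAddOrder_ofMul_iff.mpr hx
      have h1 : IsOfFinAddOrder (eqv (Additive.ofMul x)) := eqv.toAddMonoidHom.isOfFinAddOrder hadd
      have h2 : IsOfFinAddOrder (eqv (Additive.ofMul x)).1 := h1.fst
      obtain ⟨m, hm, h⟩ := isOfFinAddOrder_iff_nsmul_eq_zero.mp h2
      ext i
      have := congrFun (congrArg (fun f : Fin n →₀ ℤ => (f : Fin n → ℤ)) h) i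
      simp only [Finsupp.coe_smul, Pi.smul_apply, smul_eq_mul, Finsupp.coe_zero,
        Pi.zero_apply, nsmul_eq_mul] at this
      have : (m : ℤ) * (eqv (Additive.ofMul x)).1 i = 0 := by exact_mod_cast this
      rcases mul_eq_zero.mp this with h' | h'
      · exact absurd h' (by exact_mod_cast hm.ne')
      · simpa using h'
    by_cases htorex : ∃ x : K, x ∈ N ∧ x ≠ 1 ∧ IsOfFinOrder x
    · -- use the torsion subgroup
      obtain ⟨x₀, hx₀N, hx₀ne, hx₀tor⟩ := htorex
      refine ⟨{ carrier := {x : K | x ∈ N ∧ IsOfFinOrder x},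
                one_mem' := ⟨N.one_mem, IsOfFinOrder.one⟩,
                mul_mem' := ?_, inv_mem' := ?_ }, ?_, ?_, ?_, ?_, ?_⟩
      · rintro a b ⟨haN, hator⟩ ⟨hbN, hbtor⟩
        refine ⟨N.mul_mem haN hbN, ?_⟩
        have hc : Commute a b := congrArg Subtype.val (hcommN ⟨a, haN⟩ ⟨b, hbN⟩)
        exact hc.isOfFinOrder_mul hator hbtor
      · rintro a ⟨haN, hator⟩
        exact ⟨N.inv_mem haN, hator.inv⟩
      · -- nontrivial
        intro hFbot
        rw [Subgroup.eq_bot_iff_forall] at hFbot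
        exact hx₀ne (hFbot x₀ ⟨hx₀N, hx₀tor⟩)
      · -- normal
        refine ⟨fun a ha k => ?_⟩
        refine ⟨hNnormal.conj_mem a ha.1 k, ?_⟩
        have := (MulAut.conj k).toMonoidHom.isOfFinOrder ha.2
        simpa using this
      · -- π-invariant
        intro g a ha
        exact ⟨hNinv g a ha.1, (π g).toMonoidHom.isOfFinOrder ha.2⟩
      · -- finite
        refine Or.inl ?_
        refine Finite.of_injective (fun x : {x : K // x ∈ N ∧ IsOfFinOrder x} =>
          (eqv (Additive.ofMul (⟨(x : K), x.2.1⟩ : ↥N))).2) ?_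
        intro x y hxy
        have hx1 : (eqv (Additive.ofMul (⟨(x : K), x.2.1⟩ : ↥N))).1 = 0 :=
          hfree _ ((htor _).mp x.2.2)
        have hy1 : (eqv (Additive.ofMul (⟨(y : K), y.2.1⟩ : ↥N))).1 = 0 :=
          hfree _ ((htor _).mp y.2.2)
        have heq : eqv (Additive.ofMul (⟨(x : K), x.2.1⟩ : ↥N)) =
            eqv (Additive.ofMul (⟨(y : K), y.2.1⟩ : ↥N)) := by
          exact Prod.ext (by rw [hx1, hy1]) hxy
        have := eqv.injective heq
        have h2 : (⟨(x : K), x.2.1⟩ : ↥N) = ⟨(y : K), y.2.1⟩ := this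
        have h3 : ((⟨(x : K), x.2.1⟩ : ↥N) : K) = ((⟨(y : K), y.2.1⟩ : ↥N) : K) :=
          congrArg Subtype.val h2
        exact Subtype.ext h3
      · -- orbits
        intro a ha
        exact horb a ha.1
    · -- N itself is free abelian
      have hD0 : ∀ d : DirectSum ι fun i => ZMod (p i ^ e i), d = 0 := by
        intro d
        have hd : IsOfFinAddOrder d := is_add_torsion_of_finite d
        have h0 : IsOfFinAddOrder (0 : Fin n →₀ ℤ) := IsOfFinAddOrder.zero
        have hpair : IsOfFinAddOrder ((0, d) : (Fin n →₀ ℤ) × DirectSum ι fun i => ZMod (p i ^ e i)) :=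
          h0.prod_mk hd
        have hx : IsOfFinAddOrder (eqv.symm (0, d)) :=
          eqv.symm.toAddMonoidHom.isOfFinAddOrder hpair
        have hxtor : IsOfFinOrder (Additive.toMul (eqv.symm (0, d))) := by
          rw [← isOfFinAddOrder_ofMul_iff]
          exact hx
        have hmem : (↑(Additive.toMul (eqv.symm (0, d))) : K) ∈ N :=
          (Additive.toMul (eqv.symm (0, d))).2
        have hcoe : (↑(Additive.toMul (eqv.symm (0, d))) : K) = 1 := by
          by_contra hcn
          exact htorex ⟨_, hmem, hcn, (htor _).mpr hxtor⟩
        have h1 : Additive.toMul (eqv.symm (0, d)) = (1 : ↥N) := Subtype.ext hcoe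
        have h2 : eqv.symm (0, d) = 0 := h1
        have h3 : ((0, d) : (Fin n →₀ ℤ) × DirectSum ι fun i => ZMod (p i ^ e i)) = 0 := by
          have := congrArg eqv h2
          rw [eqv.apply_symm_apply, map_zero] at this
          exact this
        exact congrArg Prod.snd h3
      refine ⟨N, hne, hNnormal, hNinv, Or.inr ⟨n, ⟨?_⟩⟩, horb⟩
      haveI : Unique (DirectSum ι fun i => ZMod (p i ^ e i)) := ⟨⟨0⟩, fun d => hD0 d⟩
      have e1 : Additive ↥N ≃+ (Fin n →₀ ℤ) := eqv.trans AddEquiv.prodUnique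
      have e3 : Additive ↥N ≃+ (Fin n → ℤ) := e1.trans Finsupp.addEquivFunOnFinite
      exact (MulEquiv.multiplicativeAdditive ↥N).symm.trans (AddEquiv.toMultiplicative e3)

private lemma pi_mul {G : Type*} [Group G] {K : Subgroup G} (π : G →* MulAut K)
    (x y : G) (k : K) : π (x * y) k = π x (π y k) := by
  rw [map_mul]; rfl

/-- Theorem 2, sufficiency: an extension of a centerless group K is icc provided
(i) K has no nontrivial normal subgroup, finite or ≅ ℤⁿ, preserved by π(G) with only finite
π(G)-orbits, and (ii) the induced map θ : G/K → Out(K) is injective on FC(G/K). -/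
theorem icc_of_centerless_extension {G : Type*} [Group G] [Nontrivial G]
    (K : Subgroup G) [K.Normal] (hZ : Subgroup.center K = ⊥)
    (π : G →* MulAut K)
    (hπ : ∀ (g : G) (k : K), ((π g k : K) : G) = g * (k : G) * g⁻¹)
    (θ : G ⧸ K →* Out K)
    (hθ : ∀ g : G, θ (QuotientGroup.mk g) = QuotientGroup.mk (π g))
    (hi : ¬ ∃ N : Subgroup K, N ≠ ⊥ ∧ N.Normal ∧
      (∀ (g : G), ∀ n ∈ N, π g n ∈ N) ∧
      (Finite N ∨ ∃ n : ℕ, Nonempty (N ≃* Multiplicative (Fin n → ℤ))) ∧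
      (∀ n ∈ N, {x : K | ∃ g : G, π g n = x}.Finite))
    (hii : Set.InjOn θ {q : G ⧸ K | {r : G ⧸ K | IsConj q r}.Finite}) :
    IsICC G := by
  classical
  refine ⟨inferInstance, ?_⟩
  intro g hg1
  by_contra hCinf
  rw [Set.not_infinite] at hCinf
  by_cases hgK : g ∈ K
  · refine key_contradiction K π hπ hi (Subtype.val ⁻¹' {h : G | IsConj g h}) ?_ ?_ ?_
    · exact hCinf.preimage Subtype.val_injective.injOn
    · intro h t ht
      show IsConj g ((π h t : K) : G)
      rw [hπ]
      exact ht.trans (isConj_iff.mpr ⟨h, rfl⟩)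
    · intro hbot
      have hmem : (⟨g, hgK⟩ : K) ∈ Subgroup.closure (Subtype.val ⁻¹' {h : G | IsConj g h}) :=
        Subgroup.subset_closure (show IsConj g g from IsConj.refl g)
      rw [hbot, Subgroup.mem_bot] at hmem
      exact hg1 (congrArg Subtype.val hmem)
  · set T : Set K := {t : K | ∃ (k : K) (g' : G), IsConj g g' ∧ t = k * (π g' k)⁻¹} with hTdef
    by_cases hbot : Subgroup.closure T = ⊥
    · have hπg : π g = 1 := by
        ext k
        have hmem : (k * (π g k)⁻¹ : K) ∈ T := ⟨k, g, IsConj.refl g, rfl⟩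
        have h1 : (k * (π g k)⁻¹ : K) ∈ Subgroup.closure T := Subgroup.subset_closure hmem
        rw [hbot, Subgroup.mem_bot] at h1
        have h2 : π g k = k := (mul_inv_eq_one.mp h1).symm
        simpa using h2
      have hθg : θ (QuotientGroup.mk g) = θ (QuotientGroup.mk (1 : G)) := by
        rw [hθ, hθ, hπg, map_one]
      have hFCg : {r : G ⧸ K | IsConj (QuotientGroup.mk g : G ⧸ K) r}.Finite := by
        refine (hCinf.image (QuotientGroup.mk : G → G ⧸ K)).subset ?_
        intro r hr
        obtain ⟨c, hc⟩ := isConj_iff.mp hr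
        obtain ⟨x, rfl⟩ := QuotientGroup.mk_surjective c
        refine ⟨x * g * x⁻¹, isConj_iff.mpr ⟨x, rfl⟩, ?_⟩
        rw [← hc]
        simp [QuotientGroup.mk_mul, QuotientGroup.mk_inv]
      have hFC1 : {r : G ⧸ K | IsConj (QuotientGroup.mk (1 : G) : G ⧸ K) r}.Finite := by
        refine (Set.finite_singleton (1 : G ⧸ K)).subset ?_
        intro r hr
        obtain ⟨c, hc⟩ := isConj_iff.mp hr
        have : r = 1 := by rw [← hc, QuotientGroup.mk_one]; group
        simp [this]
      have := hii hFCg hFC1 hθg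
      rw [QuotientGroup.mk_one] at this
      exact hgK ((QuotientGroup.eq_one_iff g).mp this)
    · refine key_contradiction K π hπ hi T ?_ ?_ hbot
      · have himg : Subtype.val '' T ⊆
            (fun p : G × G => p.1 * p.2⁻¹) ''
              ({h : G | IsConj g h} ×ˢ {h : G | IsConj g h}) := by
          rintro _ ⟨t, ⟨k, g', hconjg, rfl⟩, rfl⟩
          refine ⟨(↑k * g' * (↑k : G)⁻¹, g'),
            ⟨hconjg.trans (isConj_iff.mpr ⟨(↑k : G), rfl⟩), hconjg⟩, ?_⟩
          show ↑k * g' * (↑k : G)⁻¹ * g'⁻¹ = ((k * (π g' k)⁻¹ : K) : G)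
          push_cast
          rw [hπ]
          group
        exact Set.Finite.of_finite_image
          ((((hCinf.prod hCinf).image _).subset himg)) Subtype.val_injective.injOn
      · rintro h t ⟨k, g', hconjg, rfl⟩
        refine ⟨π h k, h * g' * h⁻¹, hconjg.trans (isConj_iff.mpr ⟨h, rfl⟩), ?_⟩
        rw [map_mul, map_inv]
        congr 1
        congr 1
        have h1 : π h (π g' k) = π (h * g') k := (pi_mul π h g' k).symm
        have h2 : π (h * g') k = π ((h * g' * h⁻¹) * h) k := by group
        rw [h1, h2, pi_mul]
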